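/- For every integer q ≥ 2, gcd( q¹⁶(q⁸−1)(q⁶−1)(q⁴−1)(q²−1) , q⁸(q⁸+q⁴+1) − 1 ) divides 64·(q⁴+1). -/

import Mathlib

set_option linter.unnecessarySimpa false

/-- If every common integer divisor of `m` and `a` divides `c`, then `gcd m a ∣ c`. -/
lemma gcd_dvd_of_int_forall (m a c : ℕ)
    (h : ∀ d : ℤ, d ∣ (m : ℤ) → d ∣ (a : ℤ) → d ∣ (c : ℤ)) : Nat.gcd m a ∣ c := by
  have := h (Nat.gcd m a) (Int.natCast_dvd_natCast.2 (Nat.gcd_dvd_left m a))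
    (Int.natCast_dvd_natCast.2 (Nat.gcd_dvd_right m a))
  exact_mod_cast this

/-- For every integer `q ≥ 2`,
`gcd(q¹⁶(q⁸-1)(q⁶-1)(q⁴-1)(q²-1), q⁸(q⁸+q⁴+1) - 1)` divides `64(q⁴+1)`. -/
theorem f4_b4_gcd (q : ℕ) (hq : 2 ≤ q) :
    Nat.gcd (q ^ 16 * (q ^ 8 - 1) * (q ^ 6 - 1) * (q ^ 4 - 1) * (q ^ 2 - 1))
      (q ^ 8 * (q ^ 8 + q ^ 4 + 1) - 1) ∣ 64 * (q ^ 4 + 1) := by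
  have h1 : 1 ≤ q := by omega
  set M := q ^ 8 * (q ^ 8 + q ^ 4 + 1) - 1 with hMdef
  have hM1 : 1 ≤ q ^ 8 * (q ^ 8 + q ^ 4 + 1) :=
    Nat.one_le_iff_ne_zero.2 (by positivity)
  have hMz : (M : ℤ) = (q : ℤ) ^ 16 + (q : ℤ) ^ 12 + (q : ℤ) ^ 8 - 1 := by
    rw [hMdef, Nat.cast_sub hM1]; push_cast; ring
  have cast_pow_sub : ∀ k : ℕ, ((q ^ k - 1 : ℕ) : ℤ) = (q : ℤ) ^ k - 1 := by
    intro k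
    rw [Nat.cast_sub (Nat.one_le_pow _ _ (by omega))]; push_cast; ring
  -- coprimality with q^16
  have hcop : Nat.Coprime M q := by
    have hMsucc : M + 1 = q ^ 8 * (q ^ 8 + q ^ 4 + 1) := by
      rw [hMdef]; omega
    have hqdvd : q ∣ M + 1 := by
      rw [hMsucc]
      exact dvd_mul_of_dvd_left (dvd_pow_self q (by norm_num)) _
    exact Nat.Coprime.coprime_dvd_right hqdvd (by simpa using Nat.coprime_succ_self M)
  have b0 : Nat.gcd M (q ^ 16) ∣ 1 := dvd_of_eq (hcop.pow_right 16)
  have b8 : Nat.gcd M (q ^ 8 - 1) ∣ q ^ 4 + 1 := by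
    apply gcd_dvd_of_int_forall
    intro d hm ha
    have key : ((q ^ 4 + 1 : ℕ) : ℤ) =
        1 * (M : ℤ) + (-((q:ℤ)^8 + (q:ℤ)^4 + 2)) * ((q ^ 8 - 1 : ℕ) : ℤ) := by
      rw [hMz, cast_pow_sub]; push_cast; ring
    rw [key]
    exact dvd_add (hm.mul_left _) (ha.mul_left _)
  have b6 : Nat.gcd M (q ^ 6 - 1) ∣ 2 := by
    apply gcd_dvd_of_int_forall
    intro d hm ha
    have key : ((2 : ℕ) : ℤ) =
        ((q:ℤ)^4 + (q:ℤ)^2 - 1) * (M : ℤ) +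
        (-((q:ℤ)^14 + (q:ℤ)^12 + 2*(q:ℤ)^8 + (q:ℤ)^6 + (q:ℤ)^4 + (q:ℤ)^2 + 1)) *
          ((q ^ 6 - 1 : ℕ) : ℤ) := by
      rw [hMz, cast_pow_sub]; push_cast; ring
    rw [key]
    exact dvd_add (hm.mul_left _) (ha.mul_left _)
  have b4 : Nat.gcd M (q ^ 4 - 1) ∣ 2 := by
    apply gcd_dvd_of_int_forall
    intro d hm ha
    have key : ((2 : ℕ) : ℤ) =
        1 * (M : ℤ) +
        (-((q:ℤ)^12 + 2*(q:ℤ)^8 + 3*(q:ℤ)^4 + 3)) * ((q ^ 4 - 1 : ℕ) : ℤ) := by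
      rw [hMz, cast_pow_sub]; push_cast; ring
    rw [key]
    exact dvd_add (hm.mul_left _) (ha.mul_left _)
  have b2 : Nat.gcd M (q ^ 2 - 1) ∣ 2 := by
    apply gcd_dvd_of_int_forall
    intro d hm ha
    have key : ((2 : ℕ) : ℤ) =
        1 * (M : ℤ) +
        (-((q:ℤ)^14 + (q:ℤ)^12 + 2*(q:ℤ)^10 + 2*(q:ℤ)^8 + 3*(q:ℤ)^6 + 3*(q:ℤ)^4
            + 3*(q:ℤ)^2 + 3)) * ((q ^ 2 - 1 : ℕ) : ℤ) := by
      rw [hMz, cast_pow_sub]; push_cast; ring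
    rw [key]
    exact dvd_add (hm.mul_left _) (ha.mul_left _)
  -- split the gcd over the factors
  rw [Nat.gcd_comm]
  have step :
      Nat.gcd M (q ^ 16 * (q ^ 8 - 1) * (q ^ 6 - 1) * (q ^ 4 - 1) * (q ^ 2 - 1)) ∣
      Nat.gcd M (q ^ 16) * Nat.gcd M (q ^ 8 - 1) * Nat.gcd M (q ^ 6 - 1) *
        Nat.gcd M (q ^ 4 - 1) * Nat.gcd M (q ^ 2 - 1) := by
    calc Nat.gcd M (q ^ 16 * (q ^ 8 - 1) * (q ^ 6 - 1) * (q ^ 4 - 1) * (q ^ 2 - 1)) ∣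
        Nat.gcd M (q ^ 16 * (q ^ 8 - 1) * (q ^ 6 - 1) * (q ^ 4 - 1)) *
          Nat.gcd M (q ^ 2 - 1) := gcd_mul_dvd_mul_gcd _ _ _
      _ ∣ Nat.gcd M (q ^ 16 * (q ^ 8 - 1) * (q ^ 6 - 1)) * Nat.gcd M (q ^ 4 - 1) *
          Nat.gcd M (q ^ 2 - 1) :=
        mul_dvd_mul_right (gcd_mul_dvd_mul_gcd _ _ _) _
      _ ∣ Nat.gcd M (q ^ 16 * (q ^ 8 - 1)) * Nat.gcd M (q ^ 6 - 1) *
          Nat.gcd M (q ^ 4 - 1) * Nat.gcd M (q ^ 2 - 1) :=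
        mul_dvd_mul_right (mul_dvd_mul_right (gcd_mul_dvd_mul_gcd _ _ _) _) _
      _ ∣ Nat.gcd M (q ^ 16) * Nat.gcd M (q ^ 8 - 1) * Nat.gcd M (q ^ 6 - 1) *
          Nat.gcd M (q ^ 4 - 1) * Nat.gcd M (q ^ 2 - 1) :=
        mul_dvd_mul_right (mul_dvd_mul_right
          (mul_dvd_mul_right (gcd_mul_dvd_mul_gcd _ _ _) _) _) _
  refine step.trans ?_
  have prod_dvd : Nat.gcd M (q ^ 16) * Nat.gcd M (q ^ 8 - 1) * Nat.gcd M (q ^ 6 - 1) *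
      Nat.gcd M (q ^ 4 - 1) * Nat.gcd M (q ^ 2 - 1) ∣ 1 * (q ^ 4 + 1) * 2 * 2 * 2 :=
    mul_dvd_mul (mul_dvd_mul (mul_dvd_mul (mul_dvd_mul b0 b8) b6) b4) b2
  refine prod_dvd.trans ⟨8, by ring⟩
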